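/- Let $\kappa > \beta > 0$ and $\theta, \delta > 0$ satisfy $\theta > \frac{\beta}{\kappa - \beta}$ and $\delta > \frac{\theta}{1+\theta}$. Let $f' : (0,\infty) \to \mathbb{R}$ be measurable, bounded on $(0,1]$, and let $O_n : (0,\infty) \to \mathbb{R}$ satisfy $O^* := \sup_n \sup_a |O_n(a)| < \infty$ and $\sup_n \int_0^\infty |a^{\delta} f'(a)|^{1+\theta}\, \frac{|O_n(a)|}{n^{\kappa}}\, da \le M < \infty$ uniformly in $n$ (with the supremum over $n \ge 1$). Then $\frac{1}{n^{\kappa}} \int_0^\infty |f'(a) O_n(a)|\, da = o(n^{-\beta})$ as $n \to \infty$. -/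

import Mathlib

open MeasureTheory Filter Set

theorem stmt10 (κ β θ δ : ℝ) (hβ : 0 < β) (hκβ : β < κ)
    (hθ : β / (κ - β) < θ) (hδ : θ / (1 + θ) < δ)
    (f' : ℝ → ℝ) (hf'm : Measurable f') (Cf : ℝ)
    (hfb : ∀ a ∈ Set.Ioc (0:ℝ) 1, |f' a| ≤ Cf)
    (O : ℕ → ℝ → ℝ) (hOm : ∀ n, Measurable (O n))
    (Ostar : ℝ) (hO : ∀ n a, |O n a| ≤ Ostar)
    (M : ℝ)
    (hM : ∀ n : ℕ, 1 ≤ n → ∫⁻ a in Set.Ioi (0:ℝ),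
        ENNReal.ofReal (|a ^ δ * f' a| ^ (1 + θ) * |O n a| / (n : ℝ) ^ κ) ≤
          ENNReal.ofReal M) :
    Tendsto (fun n : ℕ => ENNReal.ofReal ((n : ℝ) ^ β) *
        ∫⁻ a in Set.Ioi (0:ℝ), ENNReal.ofReal (|f' a * O n a| / (n : ℝ) ^ κ))
      atTop (nhds 0) := by
  have hκβ' : 0 < κ - β := by linarith
  have hθ0 : 0 < θ := lt_trans (div_pos hβ hκβ') hθ
  set p := 1 + θ with hp
  set q := (1 + θ) / θ with hq
  have hp0 : 0 < p := by rw [hp]; linarith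
  have hq0 : 0 < q := div_pos (by linarith) hθ0
  have hpq : Real.HolderConjugate p q := Real.holderConjugate_iff.mpr ⟨by rw [hp]; linarith, by
    rw [hp, hq]; field_simp⟩
  have hCf : 0 ≤ Cf := (abs_nonneg _).trans (hfb 1 ⟨one_pos, le_rfl⟩)
  have hOs : 0 ≤ Ostar := (abs_nonneg _).trans (hO 0 0)
  set r := δ * q with hr
  have hr1 : 1 < r := by
    have h1 : θ / (1 + θ) * q = 1 := by rw [hq]; field_simp
    calc (1:ℝ) = θ / (1 + θ) * q := h1.symm
      _ < δ * q := mul_lt_mul_of_pos_right hδ hq0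
  have hβθ : β < κ * θ / (1 + θ) := by
    have h2 : β < θ * (κ - β) := (div_lt_iff₀ hκβ').1 hθ
    rw [lt_div_iff₀ (by linarith : (0:ℝ) < 1 + θ)]
    nlinarith
  -- the constant K
  have hrK : IntegrableOn (fun a : ℝ => a ^ (-r) * Ostar) (Ioi 1) :=
    (integrableOn_Ioi_rpow_of_lt (by linarith) one_pos).mul_const _
  set K := ∫⁻ a in Ioi (1:ℝ), ENNReal.ofReal (a ^ (-r) * Ostar) with hK
  have hKtop : K ≠ ⊤ := hrK.lintegral_lt_top.ne
  set C2 := (ENNReal.ofReal M) ^ (1/p) * K ^ (1/q) with hC2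
  have hC2top : C2 ≠ ⊤ :=
    ENNReal.mul_ne_top (ENNReal.rpow_ne_top_of_nonneg (by positivity) ENNReal.ofReal_ne_top)
      (ENNReal.rpow_ne_top_of_nonneg (by positivity) hKtop)
  set T : ℕ → ENNReal := fun n =>
    ENNReal.ofReal ((n:ℝ) ^ (β - κ)) * ENNReal.ofReal (Cf * Ostar)
      + ENNReal.ofReal ((n:ℝ) ^ (β - κ + κ * (1/p))) * C2 with hT
  have hT0 : Tendsto T atTop (nhds 0) := by
    have l1 : Tendsto (fun n : ℕ => ENNReal.ofReal ((n:ℝ) ^ (β - κ))) atTop (nhds 0) := by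
      rw [← ENNReal.ofReal_zero]
      apply ENNReal.tendsto_ofReal
      have e : β - κ = -(κ - β) := by ring
      rw [e]
      exact (tendsto_rpow_neg_atTop hκβ').comp tendsto_natCast_atTop_atTop
    have l2 : Tendsto (fun n : ℕ => ENNReal.ofReal ((n:ℝ) ^ (β - κ + κ * (1/p)))) atTop (nhds 0) := by
      rw [← ENNReal.ofReal_zero]
      apply ENNReal.tendsto_ofReal
      have e : β - κ + κ * (1/p) = -(κ * θ / (1 + θ) - β) := by
        rw [hp]; field_simp; ring
      rw [e]
      exact (tendsto_rpow_neg_atTop (by linarith)).comp tendsto_natCast_atTop_atTop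
    have := (ENNReal.Tendsto.mul_const (b := ENNReal.ofReal (Cf * Ostar)) l1 (Or.inr ENNReal.ofReal_ne_top)).add
      (ENNReal.Tendsto.mul_const (b := C2) l2 (Or.inr hC2top))
    simpa only [zero_mul, add_zero] using this
  apply tendsto_of_tendsto_of_tendsto_of_le_of_le' tendsto_const_nhds hT0
    (Eventually.of_forall fun n => zero_le)
  filter_upwards [eventually_ge_atTop 1] with n hn
  have hn1 : (1:ℝ) ≤ (n:ℝ) := by exact_mod_cast hn
  have hn0 : (0:ℝ) < (n:ℝ) := by linarith
  have hnκ : (0:ℝ) < (n:ℝ) ^ κ := Real.rpow_pos_of_pos hn0 κ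
  -- pull out the 1/n^κ factor
  have e1 : ∫⁻ a in Ioi (0:ℝ), ENNReal.ofReal (|f' a * O n a| / (n:ℝ) ^ κ)
      = (∫⁻ a in Ioi (0:ℝ), ENNReal.ofReal |f' a * O n a|) * ENNReal.ofReal ((n:ℝ) ^ (-κ)) := by
    simp_rw [div_eq_mul_inv, ← Real.rpow_neg hn0.le,
      ENNReal.ofReal_mul' (Real.rpow_nonneg hn0.le _)]
    exact lintegral_mul_const' _ _ ENNReal.ofReal_ne_top
  have esplit : ∫⁻ a in Ioi (0:ℝ), ENNReal.ofReal |f' a * O n a|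
      = (∫⁻ a in Ioc (0:ℝ) 1, ENNReal.ofReal |f' a * O n a|)
        + ∫⁻ a in Ioi (1:ℝ), ENNReal.ofReal |f' a * O n a| := by
    rw [← Ioc_union_Ioi_eq_Ioi (zero_le_one' ℝ),
      lintegral_union measurableSet_Ioi Ioc_disjoint_Ioi_same]
  -- bound on (0,1]
  have hA : ∫⁻ a in Ioc (0:ℝ) 1, ENNReal.ofReal |f' a * O n a| ≤ ENNReal.ofReal (Cf * Ostar) := by
    calc ∫⁻ a in Ioc (0:ℝ) 1, ENNReal.ofReal |f' a * O n a|
        ≤ ∫⁻ _ in Ioc (0:ℝ) 1, ENNReal.ofReal (Cf * Ostar) := by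
          refine setLIntegral_mono' measurableSet_Ioc fun a ha => ?_
          refine ENNReal.ofReal_le_ofReal ?_
          rw [abs_mul]
          exact mul_le_mul (hfb a ha) (hO n a) (abs_nonneg _) hCf
      _ = ENNReal.ofReal (Cf * Ostar) := by
          rw [setLIntegral_const]
          simp [Real.volume_Ioc]
  -- Hölder on (1,∞)
  set g : ℝ → ENNReal := fun a => ENNReal.ofReal (|a ^ δ * f' a| * |O n a| ^ (1/p)) with hgdef
  set h : ℝ → ENNReal := fun a => ENNReal.ofReal (a ^ (-δ) * |O n a| ^ (1/q)) with hhdef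
  have hmg : Measurable g := by
    apply Measurable.ennreal_ofReal
    exact ((measurable_id.pow_const δ).mul hf'm).abs.mul ((hOm n).abs.pow_const _)
  have hmh : Measurable h := by
    apply Measurable.ennreal_ofReal
    exact (measurable_id.pow_const (-δ)).mul ((hOm n).abs.pow_const _)
  have hsum : 1/p + 1/q = 1 := by rw [one_div, one_div]; exact hpq.inv_add_inv_eq_one
  have hgh : ∀ a ∈ Ioi (1:ℝ), ENNReal.ofReal |f' a * O n a| = (g * h) a := by
    intro a ha
    have ha0 : (0:ℝ) < a := lt_trans zero_lt_one ha
    simp only [Pi.mul_apply, hgdef, hhdef]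
    rw [← ENNReal.ofReal_mul (by positivity)]
    congr 1
    have h2 : |O n a| ^ (1/p) * |O n a| ^ (1/q) = |O n a| := by
      rw [← Real.rpow_add' (abs_nonneg _) (by rw [hsum]; norm_num), hsum, Real.rpow_one]
    have h3 : a ^ δ * a ^ (-δ) = 1 := by
      rw [← Real.rpow_add ha0]; simp
    have h1 : |a ^ δ * f' a| = a ^ δ * |f' a| := by
      rw [abs_mul, abs_of_nonneg (Real.rpow_nonneg ha0.le δ)]
    rw [abs_mul, h1,
      show a ^ δ * |f' a| * |O n a| ^ (1/p) * (a ^ (-δ) * |O n a| ^ (1/q))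
        = (a ^ δ * a ^ (-δ)) * |f' a| * (|O n a| ^ (1/p) * |O n a| ^ (1/q)) from by ring,
      h2, h3, one_mul]
  have hgp : ∀ a : ℝ, g a ^ p = ENNReal.ofReal (|a ^ δ * f' a| ^ p * |O n a|) := by
    intro a
    simp only [hgdef]
    rw [ENNReal.ofReal_rpow_of_nonneg (by positivity) hp0.le,
      Real.mul_rpow (abs_nonneg _) (Real.rpow_nonneg (abs_nonneg _) _),
      ← Real.rpow_mul (abs_nonneg _), one_div_mul_cancel hp0.ne', Real.rpow_one]
  have hgint : ∫⁻ a in Ioi (1:ℝ), g a ^ p ≤ ENNReal.ofReal M * ENNReal.ofReal ((n:ℝ) ^ κ) := by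
    simp_rw [hgp]
    calc ∫⁻ a in Ioi (1:ℝ), ENNReal.ofReal (|a ^ δ * f' a| ^ p * |O n a|)
        ≤ ∫⁻ a in Ioi (0:ℝ), ENNReal.ofReal (|a ^ δ * f' a| ^ p * |O n a|) :=
          lintegral_mono_set (Ioi_subset_Ioi zero_le_one)
      _ = (∫⁻ a in Ioi (0:ℝ), ENNReal.ofReal (|a ^ δ * f' a| ^ p * |O n a| / (n:ℝ) ^ κ))
            * ENNReal.ofReal ((n:ℝ) ^ κ) := by
          rw [← lintegral_mul_const' _ _ ENNReal.ofReal_ne_top]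
          refine lintegral_congr fun a => ?_
          rw [← ENNReal.ofReal_mul' (Real.rpow_nonneg hn0.le κ), div_mul_cancel₀ _ hnκ.ne']
      _ ≤ ENNReal.ofReal M * ENNReal.ofReal ((n:ℝ) ^ κ) := mul_le_mul_left (hM n hn) _
  have hhq : ∀ a ∈ Ioi (1:ℝ), h a ^ q = ENNReal.ofReal (a ^ (-r) * |O n a|) := by
    intro a ha
    have ha0 : (0:ℝ) < a := lt_trans zero_lt_one ha
    simp only [hhdef]
    rw [ENNReal.ofReal_rpow_of_nonneg (by positivity) hq0.le,
      Real.mul_rpow (Real.rpow_nonneg ha0.le _) (Real.rpow_nonneg (abs_nonneg _) _),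
      ← Real.rpow_mul ha0.le, ← Real.rpow_mul (abs_nonneg _),
      one_div_mul_cancel hq0.ne', Real.rpow_one]
    congr 2
    rw [hr]; ring
  have hhint : ∫⁻ a in Ioi (1:ℝ), h a ^ q ≤ K := by
    rw [setLIntegral_congr_fun measurableSet_Ioi hhq]
    refine setLIntegral_mono' measurableSet_Ioi fun a ha => ?_
    have ha0 : (0:ℝ) < a := lt_trans zero_lt_one ha
    exact ENNReal.ofReal_le_ofReal
      (mul_le_mul_of_nonneg_left (hO n a) (Real.rpow_nonneg ha0.le _))
  have hB : ∫⁻ a in Ioi (1:ℝ), ENNReal.ofReal |f' a * O n a|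
      ≤ (ENNReal.ofReal M * ENNReal.ofReal ((n:ℝ) ^ κ)) ^ (1/p) * K ^ (1/q) := by
    rw [setLIntegral_congr_fun measurableSet_Ioi hgh]
    calc ∫⁻ a in Ioi (1:ℝ), (g * h) a
        ≤ (∫⁻ a in Ioi (1:ℝ), g a ^ p) ^ (1/p) * (∫⁻ a in Ioi (1:ℝ), h a ^ q) ^ (1/q) :=
          ENNReal.lintegral_mul_le_Lp_mul_Lq _ hpq hmg.aemeasurable hmh.aemeasurable
      _ ≤ (ENNReal.ofReal M * ENNReal.ofReal ((n:ℝ) ^ κ)) ^ (1/p) * K ^ (1/q) := by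
          exact mul_le_mul' (ENNReal.rpow_le_rpow hgint (by positivity))
            (ENNReal.rpow_le_rpow hhint (by positivity))
  -- assemble
  have pow1 : ENNReal.ofReal ((n:ℝ) ^ β) * ENNReal.ofReal ((n:ℝ) ^ (-κ))
      = ENNReal.ofReal ((n:ℝ) ^ (β - κ)) := by
    rw [← ENNReal.ofReal_mul (Real.rpow_nonneg hn0.le _), ← Real.rpow_add hn0, sub_eq_add_neg]
  have pow2 : ENNReal.ofReal ((n:ℝ) ^ κ) ^ (1/p) = ENNReal.ofReal ((n:ℝ) ^ (κ * (1/p))) := by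
    rw [ENNReal.ofReal_rpow_of_pos hnκ, ← Real.rpow_mul hn0.le]
  have pow3 : ENNReal.ofReal ((n:ℝ) ^ (β - κ)) * ENNReal.ofReal ((n:ℝ) ^ (κ * (1/p)))
      = ENNReal.ofReal ((n:ℝ) ^ (β - κ + κ * (1/p))) := by
    rw [← ENNReal.ofReal_mul (Real.rpow_nonneg hn0.le _), ← Real.rpow_add hn0]
  rw [e1, esplit]
  calc ENNReal.ofReal ((n:ℝ) ^ β) *
      (((∫⁻ a in Ioc (0:ℝ) 1, ENNReal.ofReal |f' a * O n a|)
        + ∫⁻ a in Ioi (1:ℝ), ENNReal.ofReal |f' a * O n a|) * ENNReal.ofReal ((n:ℝ) ^ (-κ)))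
      ≤ ENNReal.ofReal ((n:ℝ) ^ β) *
        ((ENNReal.ofReal (Cf * Ostar)
          + (ENNReal.ofReal M * ENNReal.ofReal ((n:ℝ) ^ κ)) ^ (1/p) * K ^ (1/q))
            * ENNReal.ofReal ((n:ℝ) ^ (-κ))) := by
        gcongr
    _ = T n := by
        rw [ENNReal.mul_rpow_of_nonneg _ _ (by positivity), pow2]
        rw [show ENNReal.ofReal ((n:ℝ) ^ β) *
            ((ENNReal.ofReal (Cf * Ostar)
              + ENNReal.ofReal M ^ (1/p) * ENNReal.ofReal ((n:ℝ) ^ (κ * (1/p))) * K ^ (1/q))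
                * ENNReal.ofReal ((n:ℝ) ^ (-κ)))
          = (ENNReal.ofReal ((n:ℝ) ^ β) * ENNReal.ofReal ((n:ℝ) ^ (-κ)))
              * ENNReal.ofReal (Cf * Ostar)
            + ((ENNReal.ofReal ((n:ℝ) ^ β) * ENNReal.ofReal ((n:ℝ) ^ (-κ)))
                * ENNReal.ofReal ((n:ℝ) ^ (κ * (1/p))))
              * (ENNReal.ofReal M ^ (1/p) * K ^ (1/q)) from by ring,
          pow1, pow3]
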